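/- Let Ω be a bounded open subset of ℂ^d and let S be a set of holomorphic functions from Ω to the open unit disk 𝔻. Let T be a generic matrix d-tuple on Ω with eigenvector basis v_1,…,v_n of ℂ^n and distinct joint eigenvalues λ_1,…,λ_n ∈ Ω, and suppose ‖ψ(T)‖ ≤ 1 for every ψ ∈ S. Define k : Ω × Ω → ℂ by k(λ_i, λ_j) = ⟨v_i, v_j⟩ for 1 ≤ i, j ≤ n, and k(z, w) = 0 whenever z or w is not among λ_1,…,λ_n. Then k ∈ K_S, taking X = Ω. -/

import Mathlib

open scoped ComplexConjugate

noncomputable section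

/-- A generic matrix `d`-tuple on `Ω`: a `d`-tuple of commuting `n × n` matrices having a
basis of joint eigenvectors `v j` with distinct joint eigenvalues `lam j ∈ Ω`.  Such a tuple
is completely determined by the eigendata `(n, lam, v)`. -/
structure GenTuple (d : ℕ) (Ω : Set (Fin d → ℂ)) where
  n : ℕ
  npos : 0 < n
  lam : Fin n → (Fin d → ℂ)
  v : Fin n → (Fin n → ℂ)
  indep : LinearIndependent ℂ v
  inj : Function.Injective lam
  mem : ∀ j, lam j ∈ Ω

namespace GenTuple

variable {d : ℕ} {Ω : Set (Fin d → ℂ)}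

/-- The matrix whose columns are the eigenvectors `v j`. -/
def P (T : GenTuple d Ω) : Matrix (Fin T.n) (Fin T.n) ℂ :=
  Matrix.of fun i j => T.v j i

/-- `φ(T)`: the unique matrix with `φ(T) vⱼ = φ(λⱼ) vⱼ` for all `j`. -/
def evalM (T : GenTuple d Ω) (φ : (Fin d → ℂ) → ℂ) : Matrix (Fin T.n) (Fin T.n) ℂ :=
  T.P * Matrix.diagonal (fun j => φ (T.lam j)) * T.P⁻¹

/-- `‖φ(T)‖`, the operator norm of `φ(T)` on the Euclidean space `ℂ^n`. -/
def opNorm (T : GenTuple d Ω) (φ : (Fin d → ℂ) → ℂ) : ℝ :=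
  ‖Matrix.toEuclideanCLM (𝕜 := ℂ) (T.evalM φ)‖

end GenTuple

/-- The set of values `‖φ(T)‖` as `T` ranges over the class `𝒞`. -/
def normSet {d : ℕ} {Ω : Set (Fin d → ℂ)} (𝒞 : Set (GenTuple d Ω))
    (φ : (Fin d → ℂ) → ℂ) : Set ℝ :=
  (fun T : GenTuple d Ω => T.opNorm φ) '' 𝒞

/-- `‖φ‖_𝒞 = sup_{T ∈ 𝒞} ‖φ(T)‖`. -/
def cNorm {d : ℕ} {Ω : Set (Fin d → ℂ)} (𝒞 : Set (GenTuple d Ω))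
    (φ : (Fin d → ℂ) → ℂ) : ℝ :=
  sSup (normSet 𝒞 φ)

/-- `φ ∈ H^∞(𝒞)`: `φ` is holomorphic on `Ω` and `‖φ‖_𝒞 < ∞`. -/
def MemHinf {d : ℕ} (Ω : Set (Fin d → ℂ)) (𝒞 : Set (GenTuple d Ω))
    (φ : (Fin d → ℂ) → ℂ) : Prop :=
  DifferentiableOn ℂ φ Ω ∧ BddAbove (normSet 𝒞 φ)

/-- `𝒞` is subordinate to `Ω`: `𝒞` is nonempty and contains, for every `λ ∈ Ω`, the
`1 × 1` tuple `(λ¹, …, λᵈ)`. -/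
def Subordinate {d : ℕ} (Ω : Set (Fin d → ℂ)) (𝒞 : Set (GenTuple d Ω)) : Prop :=
  𝒞.Nonempty ∧ ∀ lam ∈ Ω, ∃ T ∈ 𝒞, T.n = 1 ∧ ∀ j, T.lam j = lam

open scoped ComplexOrder

/-- A kernel `k` is positive on the set `X`: for all finite lists of points of `X` and all
scalars `c`, `Σᵢⱼ cᵢ conj(cⱼ) k(zᵢ, zⱼ) ≥ 0`. -/
def IsPosKernelOn {α : Type*} (X : Set α) (k : α → α → ℂ) : Prop :=
  ∀ (m : ℕ) (z : Fin m → α), (∀ i, z i ∈ X) → ∀ c : Fin m → ℂ,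
    0 ≤ ∑ i, ∑ j, c i * conj (c j) * k (z i) (z j)

/-- `k ∈ K_S` (with `X` the underlying set): `(z,w) ↦ (1 − ψ(z) conj(ψ(w))) k(z,w)` is a
positive kernel for every `ψ ∈ S`. -/
def MemKS {α : Type*} (X : Set α) (S : Set (α → ℂ)) (k : α → α → ℂ) : Prop :=
  ∀ ψ ∈ S, IsPosKernelOn X (fun z w => (1 - ψ z * conj (ψ w)) * k z w)

/-- the kernel supported on the joint eigenvalues of a generic tuple `T`
satisfying `‖ψ(T)‖ ≤ 1` for all `ψ ∈ S`, with `k(λᵢ, λⱼ) = ⟨vᵢ, vⱼ⟩`, belongs to `K_S`. -/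
theorem stmt6 {d : ℕ} (Ω : Set (Fin d → ℂ)) (hΩopen : IsOpen Ω)
    (hΩbdd : Bornology.IsBounded Ω)
    (S : Set ((Fin d → ℂ) → ℂ))
    (hShol : ∀ ψ ∈ S, DifferentiableOn ℂ ψ Ω)
    (hSD : ∀ ψ ∈ S, ∀ z ∈ Ω, ‖ψ z‖ < 1)
    (T : GenTuple d Ω) (hT : ∀ ψ ∈ S, T.opNorm ψ ≤ 1)
    (k : (Fin d → ℂ) → (Fin d → ℂ) → ℂ)
    (hkeig : ∀ i j, k (T.lam i) (T.lam j) = ∑ m, T.v i m * conj (T.v j m))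
    (hkzero : ∀ z w, z ∉ Set.range T.lam ∨ w ∉ Set.range T.lam → k z w = 0) :
    MemKS Ω S k := by
  classical
  intro ψ hψ m z hz c
  set A := T.evalM ψ with hAdef
  -- P is invertible
  have hPunit : IsUnit T.P := by
    rw [← Matrix.linearIndependent_cols_iff_isUnit]
    exact T.indep
  have hPdet : IsUnit T.P.det := (Matrix.isUnit_iff_isUnit_det _).mp hPunit
  have key : A * T.P = T.P * Matrix.diagonal (fun j => ψ (T.lam j)) := by
    rw [hAdef, GenTuple.evalM, Matrix.mul_assoc, Matrix.nonsing_inv_mul _ hPdet,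
      Matrix.mul_one]
  -- eigenvector property of A
  have heig : ∀ j, A.mulVec (T.v j) = ψ (T.lam j) • T.v j := by
    intro j
    have hvj : T.v j = T.P.mulVec (Pi.single j 1) := by
      ext i
      simp [Matrix.mulVec_single, GenTuple.P]
    rw [hvj, Matrix.mulVec_mulVec, key]
    ext i
    simp [Matrix.mulVec_single, Matrix.mul_diagonal, GenTuple.P, mul_comm]
  -- the vectors p i
  set p : Fin m → (Fin T.n → ℂ) := fun i =>
    if h : z i ∈ Set.range T.lam then T.v h.choose else 0 with hp
  have hApi : ∀ i, A.mulVec (p i) = ψ (z i) • p i := by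
    intro i
    by_cases h : z i ∈ Set.range T.lam
    · have hc : T.lam h.choose = z i := h.choose_spec
      simp only [hp, dif_pos h]
      rw [heig, hc]
    · simp only [hp, dif_neg h]
      simp [Matrix.mulVec_zero]
  have hk2 : ∀ i j, k (z i) (z j) = ∑ t, p i t * conj (p j t) := by
    intro i j
    by_cases hi : z i ∈ Set.range T.lam
    · by_cases hj : z j ∈ Set.range T.lam
      · have hci : T.lam hi.choose = z i := hi.choose_spec
        have hcj : T.lam hj.choose = z j := hj.choose_spec
        rw [← hci, ← hcj, hkeig]
        simp only [hp, dif_pos hi, dif_pos hj]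
      · rw [hkzero _ _ (Or.inr hj)]
        have hpj : p j = 0 := dif_neg hj
        simp [hpj]
    · rw [hkzero _ _ (Or.inl hi)]
      have hpi : p i = 0 := dif_neg hi
      simp [hpi]
  set u : Fin T.n → ℂ := fun t => ∑ i, c i * p i t with hu
  set w : Fin T.n → ℂ := fun t => ∑ i, c i * ψ (z i) * p i t with hwdef
  have hw : A.mulVec u = w := by
    ext t
    have h1 : A.mulVec u t = ∑ i, c i * (A.mulVec (p i) t) := by
      simp only [Matrix.mulVec, dotProduct, hu, Finset.mul_sum]
      rw [Finset.sum_comm]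
      refine Finset.sum_congr rfl fun i _ => Finset.sum_congr rfl fun l _ => ?_
      ring
    rw [h1]
    refine Finset.sum_congr rfl fun i _ => ?_
    rw [hApi i]
    simp only [Pi.smul_apply, smul_eq_mul]
    ring
  have expand : ∀ a b : Fin m → ℂ,
      ∑ i, ∑ j, a i * conj (b j) * ∑ t, p i t * conj (p j t)
        = ∑ t, (∑ i, a i * p i t) * conj (∑ j, b j * p j t) := by
    intro a b
    have hterm : ∀ t, (∑ i, a i * p i t) * conj (∑ j, b j * p j t)
        = ∑ i, ∑ j, a i * conj (b j) * (p i t * conj (p j t)) := by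
      intro t
      rw [map_sum, Finset.sum_mul_sum]
      refine Finset.sum_congr rfl fun i _ => Finset.sum_congr rfl fun j _ => ?_
      rw [map_mul]; ring
    simp only [hterm, Finset.mul_sum]
    conv_rhs => rw [Finset.sum_comm]
    exact Finset.sum_congr rfl fun i _ => Finset.sum_comm
  have hmain : ∑ i, ∑ j, c i * conj (c j) * ((1 - ψ (z i) * conj (ψ (z j))) * k (z i) (z j))
      = (∑ t, u t * conj (u t)) - ∑ t, w t * conj (w t) := by
    have e1 := expand c c
    have e2 := expand (fun i => c i * ψ (z i)) (fun i => c i * ψ (z i))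
    simp only [hk2]
    have split : ∀ i j, c i * conj (c j) * ((1 - ψ (z i) * conj (ψ (z j)))
          * ∑ t, p i t * conj (p j t))
        = c i * conj (c j) * ∑ t, p i t * conj (p j t)
          - (c i * ψ (z i)) * conj (c j * ψ (z j)) * ∑ t, p i t * conj (p j t) := by
      intro i j
      simp only [map_mul]
      ring
    simp only [split, Finset.sum_sub_distrib]
    rw [e1, e2]
  rw [hmain]
  -- identify the two sums with squared Euclidean norms
  have hnorm : ∀ x : Fin T.n → ℂ,
      ∑ t, x t * conj (x t) = ((‖(WithLp.equiv 2 (Fin T.n → ℂ)).symm x‖ ^ 2 : ℝ) : ℂ) := by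
    intro x
    rw [EuclideanSpace.norm_eq]
    rw [Real.sq_sqrt (by positivity)]
    push_cast
    refine Finset.sum_congr rfl fun t _ => ?_
    rw [mul_comm, Complex.conj_mul']
    norm_cast
  rw [hnorm u, hnorm w]
  rw [← Complex.ofReal_sub]
  rw [Complex.zero_le_real]
  rw [sub_nonneg]
  -- use the operator norm bound
  have hA1 : ‖Matrix.toEuclideanCLM (𝕜 := ℂ) A‖ ≤ 1 := hT ψ hψ
  have happ : Matrix.toEuclideanCLM (𝕜 := ℂ) A ((WithLp.equiv 2 (Fin T.n → ℂ)).symm u)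
      = (WithLp.equiv 2 (Fin T.n → ℂ)).symm w := by
    rw [← hw]; rfl
  have hle : ‖(WithLp.equiv 2 (Fin T.n → ℂ)).symm w‖
      ≤ ‖(WithLp.equiv 2 (Fin T.n → ℂ)).symm u‖ := by
    rw [← happ]
    calc ‖Matrix.toEuclideanCLM (𝕜 := ℂ) A ((WithLp.equiv 2 (Fin T.n → ℂ)).symm u)‖
        ≤ ‖Matrix.toEuclideanCLM (𝕜 := ℂ) A‖ * ‖(WithLp.equiv 2 (Fin T.n → ℂ)).symm u‖ :=
          (Matrix.toEuclideanCLM (𝕜 := ℂ) A).le_opNorm _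
      _ ≤ 1 * ‖(WithLp.equiv 2 (Fin T.n → ℂ)).symm u‖ := by
          gcongr
      _ = _ := one_mul _
  exact pow_le_pow_left₀ (norm_nonneg _) hle 2
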